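/- Let Γ be a group whose integral group ring Z[Γ] has the property that every homomorphism of free Z[Γ]-modules that becomes injective after augmentation ⊗_{Z[Γ]} Z is injective. Then for any homomorphism f̃: M → N of free Z[Γ]-modules with M finitely generated, the K(Γ)-rank of the image of f̃ is at least the Q-rank of the image of the induced map f = f̃ ⊗ id: M ⊗_{Z[Γ]} Z → N ⊗_{Z[Γ]} Z, where Z[Γ] is assumed to be an Ore domain with skew quotient field K(Γ). -/

import Mathlib

open MulOpposite

/-- Strebel's rank lemma.  Let `Γ` be a group whose integral group
ring `R = ℤ[Γ]` (an Ore domain) has Strebel's property: every homomorphism of free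
right `R`-modules whose augmentation is injective is itself injective.  Then for any
homomorphism `f' : M → N` of free right `R`-modules with `M` finitely generated, the
`K(Γ)`-rank of the image of `f'` is at least the `ℚ`-rank of the image of the
augmented map `f`.  Right `R`-modules are modules over `Rᵐᵒᵖ`; free modules are of the
form `ι →₀ Rᵐᵒᵖ`; the augmentation `ε` sends every group element to `1`; and "rank of
the image is at least `r`" is expressed (as in the paper) by the existence of an
embedding of a free module of rank `r` into the image. -/
theorem strebel_rank_lemma
    (Γ : Type) [Group Γ]
    (ε : (MonoidAlgebra ℤ Γ)ᵐᵒᵖ →+* ℤ)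
    (hε : ∀ g : Γ, ε (op (MonoidAlgebra.single g (1 : ℤ))) = 1)
    (hdom : ∀ a b : MonoidAlgebra ℤ Γ, a * b = 0 → a = 0 ∨ b = 0)
    (hore : ∀ a b : MonoidAlgebra ℤ Γ, a ≠ 0 → b ≠ 0 →
      ∃ x y : MonoidAlgebra ℤ Γ, x ≠ 0 ∧ y ≠ 0 ∧ a * x = b * y)
    (hconservative : ∀ (I J : Type)
      (g' : (I →₀ (MonoidAlgebra ℤ Γ)ᵐᵒᵖ) →ₗ[(MonoidAlgebra ℤ Γ)ᵐᵒᵖ]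
            (J →₀ (MonoidAlgebra ℤ Γ)ᵐᵒᵖ))
      (g : (I →₀ ℤ) →ₗ[ℤ] (J →₀ ℤ)),
      (∀ x : I →₀ (MonoidAlgebra ℤ Γ)ᵐᵒᵖ,
        g (x.mapRange ε (map_zero ε)) = (g' x).mapRange ε (map_zero ε)) →
      Function.Injective g → Function.Injective g')
    (m : ℕ) (I : Type)
    (f' : (Fin m →₀ (MonoidAlgebra ℤ Γ)ᵐᵒᵖ) →ₗ[(MonoidAlgebra ℤ Γ)ᵐᵒᵖ]
          (I →₀ (MonoidAlgebra ℤ Γ)ᵐᵒᵖ))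
    (f : (Fin m →₀ ℤ) →ₗ[ℤ] (I →₀ ℤ))
    (hf : ∀ x : Fin m →₀ (MonoidAlgebra ℤ Γ)ᵐᵒᵖ,
      f (x.mapRange ε (map_zero ε)) = (f' x).mapRange ε (map_zero ε))
    (r : ℕ)
    (hr : ∃ g : (Fin r →₀ ℤ) →ₗ[ℤ] (I →₀ ℤ),
      Function.Injective g ∧ LinearMap.range g ≤ LinearMap.range f) :
    ∃ g' : (Fin r →₀ (MonoidAlgebra ℤ Γ)ᵐᵒᵖ) →ₗ[(MonoidAlgebra ℤ Γ)ᵐᵒᵖ]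
           (I →₀ (MonoidAlgebra ℤ Γ)ᵐᵒᵖ),
      Function.Injective g' ∧ LinearMap.range g' ≤ LinearMap.range f' := by
  set R := (MonoidAlgebra ℤ Γ)ᵐᵒᵖ with hR
  obtain ⟨g, hginj, hgrange⟩ := hr
  -- lift each basis image of `g` through `f`
  have hv : ∀ j : Fin r, ∃ v : Fin m →₀ ℤ, f v = g (Finsupp.single j 1) := by
    intro j
    exact hgrange ⟨Finsupp.single j 1, rfl⟩
  choose v hv using hv
  -- lift `v j` to a module element over `R` via the integer coefficients
  set vt : Fin r → (Fin m →₀ R) :=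
    fun j => (v j).mapRange (fun n : ℤ => (n : R)) (by exact Int.cast_zero) with hvt
  have hvtε : ∀ j, (vt j).mapRange ε (map_zero ε) = v j := by
    intro j
    ext i
    simp [hvt, Finsupp.mapRange_apply]
  -- define `g'` as `f'` composed with the lift
  set h : (Fin r →₀ R) →ₗ[R] (Fin m →₀ R) := Finsupp.linearCombination R vt with hh
  refine ⟨f'.comp h, ?_, ?_⟩
  · -- injectivity via conservativity
    refine hconservative (Fin r) I (f'.comp h) g ?_ hginj
    intro x
    induction x using Finsupp.induction_linear with
    | zero => simp
    | add a b ha hb =>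
        rw [Finsupp.mapRange_add (map_add ε), map_add, ha, hb, map_add,
          Finsupp.mapRange_add (map_add ε)]
    | single j c =>
        have h1 : (Finsupp.single j c : Fin r →₀ R).mapRange ε (map_zero ε)
            = Finsupp.single j (ε c) := Finsupp.mapRange_single
        have h2 : (Finsupp.single j (ε c) : Fin r →₀ ℤ) = (ε c) • Finsupp.single j (1 : ℤ) := by
          rw [Finsupp.smul_single, smul_eq_mul, mul_one]
        have h3 : h (Finsupp.single j c) = c • vt j := by
          simp [hh, Finsupp.linearCombination_single]
        have h4 : ((c • vt j : Fin m →₀ R)).mapRange ε (map_zero ε)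
            = (ε c) • ((vt j).mapRange ε (map_zero ε)) := by
          ext i
          simp [Finsupp.mapRange_apply, smul_eq_mul, map_mul]
        rw [h1, h2, map_smul, ← hv, LinearMap.comp_apply, h3, ← hf, h4, hvtε, map_smul]
  · -- range containment
    intro y hy
    obtain ⟨x, rfl⟩ := hy
    exact ⟨h x, rfl⟩
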